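/- arXiv:2411.13063 — 2 statements merged into one kernel-verified Lean document; each statement's English description precedes it below -/
import Mathlib

section
/- Consider the change of variables from the lower triangular coordinates (w_{i,j})_{1 ≤ j ≤ i ≤ k} with w_{i,i} > 0 to the invariants u_{i,j} = ⟨w_i, w_j⟩ = Σ_{ℓ=1}^{min(i,j)} w_{i,ℓ} w_{j,ℓ} for 1 ≤ j ≤ i ≤ k. With variables ordered lexicographically, the Jacobian matrix ∂u/∂w is lower triangular with diagonal entries (1 + δ_{i,j}) w_{j,j}, and its determinant equals 2^k √(det(G_1) det(G_2) ⋯ det(G_k)), where G_i is the Gram matrix of w_1,...,w_i. -/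
open Finset

/-- Index set for the entries `(i,j)` with `j ≤ i` of a lower triangular matrix. -/
abbrev LTIdx (k : ℕ) := {p : Fin k × Fin k // p.2 ≤ p.1}

/-- The lower triangular matrix built from the coordinates `w_{i,j}`, `j ≤ i`. -/
def toMat (k : ℕ) (w : LTIdx k → ℝ) : Matrix (Fin k) (Fin k) ℝ :=
  Matrix.of fun i j => if h : j ≤ i then w ⟨(i, j), h⟩ else 0

/-- The invariants `u_{i,j} = ⟨w_i, w_j⟩` for `j ≤ i`. -/
def uMap (k : ℕ) (w : LTIdx k → ℝ) : LTIdx k → ℝ :=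
  fun p => ∑ l : Fin k, toMat k w p.1.1 l * toMat k w p.1.2 l

/-- The Jacobian matrix `∂u/∂w`. -/
noncomputable def jacMat (k : ℕ) (w : LTIdx k → ℝ) : Matrix (LTIdx k) (LTIdx k) ℝ :=
  Matrix.of fun p q => fderiv ℝ (fun x => uMap k x p) w (Pi.single q 1)

/-- Determinant of the Gram matrix of the first `n` rows of `W`. -/
noncomputable def gramDet (k : ℕ) (W : Matrix (Fin k) (Fin k) ℝ) (n : ℕ) : ℝ :=
  Matrix.det (Matrix.of fun r s : Fin (min n k) =>
    ∑ l : Fin k, W (Fin.castLE (min_le_right n k) r) l * W (Fin.castLE (min_le_right n k) s) l)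

/-! ### Auxiliary lemmas -/

noncomputable def Tcoord (k : ℕ) (i l : Fin k) : ((LTIdx k → ℝ)) →L[ℝ] ℝ :=
  if h : l ≤ i then ContinuousLinearMap.proj (⟨(i, l), h⟩ : LTIdx k) else 0

lemma Tcoord_apply (k : ℕ) (i l : Fin k) (x : LTIdx k → ℝ) : Tcoord k i l x = toMat k x i l := by
  unfold Tcoord toMat
  split <;> simp [Matrix.of_apply, *]

lemma hasFDeriv_u (k : ℕ) (w : LTIdx k → ℝ) (p : LTIdx k) :
    HasFDerivAt (fun x => uMap k x p)
      (∑ l : Fin k, (toMat k w p.1.1 l • Tcoord k p.1.2 l + toMat k w p.1.2 l • Tcoord k p.1.1 l)) w := by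
  have : (fun x => uMap k x p) = fun x => ∑ l : Fin k, Tcoord k p.1.1 l x * Tcoord k p.1.2 l x := by
    funext x; simp [uMap, Tcoord_apply]
  rw [this]
  apply HasFDerivAt.fun_sum
  intro l _
  have h1 := (Tcoord k p.1.1 l).hasFDerivAt (x := w)
  have h2 := (Tcoord k p.1.2 l).hasFDerivAt (x := w)
  simpa [Tcoord_apply] using h1.fun_mul h2

lemma toMat_single (k : ℕ) (q : LTIdx k) (j l : Fin k) :
    toMat k (Pi.single q 1) j l = if j = q.1.1 ∧ l = q.1.2 then 1 else 0 := by
  unfold toMat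
  simp only [Matrix.of_apply]
  split
  · next h =>
    rw [Pi.single_apply]
    congr 1
    rw [Subtype.ext_iff, Prod.ext_iff]
  · next h =>
    rw [if_neg]
    rintro ⟨rfl, rfl⟩
    exact h q.2

lemma sum_single (k : ℕ) (w : LTIdx k → ℝ) (i j : Fin k) (q : LTIdx k) :
    ∑ l, toMat k w i l * toMat k (Pi.single q 1) j l
      = if q.1.1 = j then toMat k w i q.1.2 else 0 := by
  simp only [toMat_single, mul_ite, mul_one, mul_zero]
  rw [Finset.sum_eq_single q.1.2]
  · by_cases h : j = q.1.1 <;> simp [h, eq_comm]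
  · intro l _ hl; simp [hl]
  · simp

lemma jac_apply (k : ℕ) (w : LTIdx k → ℝ) (p q : LTIdx k) :
    jacMat k w p q =
      (if q.1.1 = p.1.1 then toMat k w p.1.2 q.1.2 else 0) +
      (if q.1.1 = p.1.2 then toMat k w p.1.1 q.1.2 else 0) := by
  have h := (hasFDeriv_u k w p).fderiv
  simp only [jacMat, Matrix.of_apply, h]
  rw [ContinuousLinearMap.sum_apply]
  simp only [ContinuousLinearMap.add_apply, ContinuousLinearMap.smul_apply, smul_eq_mul,
    Tcoord_apply]
  rw [Finset.sum_add_distrib, sum_single, sum_single]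
  ring

lemma sum_fin_trunc {k m : ℕ} (hm : m ≤ k) (f : Fin k → ℝ)
    (hf : ∀ l : Fin k, m ≤ l.1 → f l = 0) :
    ∑ l : Fin k, f l = ∑ l : Fin m, f (Fin.castLE hm l) := by
  set g : ℕ → ℝ := fun n => if h : n < k then f ⟨n, h⟩ else 0 with hg
  have h1 : ∑ l : Fin k, f l = ∑ n ∈ range k, g n := by
    rw [← Fin.sum_univ_eq_sum_range g k]
    apply Finset.sum_congr rfl
    intro l _
    simp [hg, l.2]
  have h2 : ∑ l : Fin m, f (Fin.castLE hm l) = ∑ n ∈ range m, g n := by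
    rw [← Fin.sum_univ_eq_sum_range g m]
    apply Finset.sum_congr rfl
    intro l _
    have hlk : (l.1 : ℕ) < k := lt_of_lt_of_le l.2 hm
    simp [hg, hlk]
    rfl
  rw [h1, h2]
  symm
  apply Finset.sum_subset (Finset.range_subset_range.2 hm)
  intro n hn hn'
  simp only [mem_range, not_lt] at hn hn'
  simp only [hg]
  split
  · exact hf _ hn'
  · next h => exact absurd hn h

lemma prod_fin_trunc {k m : ℕ} (hm : m ≤ k) (f : Fin k → ℝ)
    (hf : ∀ l : Fin k, m ≤ l.1 → f l = 1) :
    ∏ l : Fin k, f l = ∏ l : Fin m, f (Fin.castLE hm l) := by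
  set g : ℕ → ℝ := fun n => if h : n < k then f ⟨n, h⟩ else 1 with hg
  have h1 : ∏ l : Fin k, f l = ∏ n ∈ range k, g n := by
    rw [← Fin.prod_univ_eq_prod_range g k]
    apply Finset.prod_congr rfl
    intro l _
    simp [hg, l.2]
  have h2 : ∏ l : Fin m, f (Fin.castLE hm l) = ∏ n ∈ range m, g n := by
    rw [← Fin.prod_univ_eq_prod_range g m]
    apply Finset.prod_congr rfl
    intro l _
    have hlk : (l.1 : ℕ) < k := lt_of_lt_of_le l.2 hm
    simp [hg, hlk]
    rfl
  rw [h1, h2]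
  symm
  apply Finset.prod_subset (Finset.range_subset_range.2 hm)
  intro n hn hn'
  simp only [mem_range, not_lt] at hn hn'
  simp only [hg]
  split
  · exact hf _ hn'
  · next h => exact absurd hn h

lemma toMat_zero (k : ℕ) (w : LTIdx k → ℝ) {i j : Fin k} (h : ¬ j ≤ i) :
    toMat k w i j = 0 := by
  simp [toMat, h]

lemma gramDet_eq (k : ℕ) (w : LTIdx k → ℝ) (n : ℕ) :
    gramDet k (toMat k w) n
      = (∏ j : Fin (min n k),
          w ⟨(Fin.castLE (min_le_right n k) j, Fin.castLE (min_le_right n k) j),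
              le_refl _⟩) ^ 2 := by
  have hm : min n k ≤ k := min_le_right n k
  set c := Fin.castLE hm with hc
  set B : Matrix (Fin (min n k)) (Fin (min n k)) ℝ :=
    Matrix.of fun r s => toMat k w (c r) (c s) with hB
  have hmat : (Matrix.of fun r s : Fin (min n k) =>
      ∑ l : Fin k, toMat k w (c r) l * toMat k w (c s) l) = B * Matrix.transpose B := by
    ext r s
    simp only [Matrix.of_apply, Matrix.mul_apply, Matrix.transpose_apply, hB]
    apply sum_fin_trunc hm
    intro l hl
    have : ¬ l ≤ c r := by
      intro hle
      have h1 : (l : ℕ) ≤ r.1 := hle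
      have h2 : (r : ℕ) < min n k := r.2
      omega
    rw [toMat_zero k w this, zero_mul]
  rw [gramDet, hmat, Matrix.det_mul, Matrix.det_transpose, ← sq]
  congr 1
  rw [Matrix.det_of_lowerTriangular]
  · apply Finset.prod_congr rfl
    intro r _
    simp [hB, toMat]
  · intro r s hrs
    have hlt : r < s := OrderDual.toDual_lt_toDual.1 hrs
    apply toMat_zero
    intro hle
    have h1 : (s : ℕ) ≤ r.1 := hle
    have h2 : (r : ℕ) < s.1 := hlt
    omega

lemma prod_LTIdx (k : ℕ) (f : LTIdx k → ℝ) :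
    ∏ p : LTIdx k, f p
      = ∏ i : Fin k, ∏ j : Fin k, (if h : j ≤ i then f ⟨(i, j), h⟩ else 1) := by
  set F : Fin k × Fin k → ℝ := fun p => if h : p.2 ≤ p.1 then f ⟨p, h⟩ else 1 with hF
  have h1 : ∏ p : LTIdx k, f p = ∏ p : LTIdx k, F p.1 := by
    apply Finset.prod_congr rfl
    intro p _
    simp [hF, p.2]
  have h2 : ∏ p : LTIdx k, F p.1
      = ∏ x ∈ Finset.univ.filter (fun p : Fin k × Fin k => p.2 ≤ p.1), F x :=
    (Finset.prod_subtype (p := fun p : Fin k × Fin k => p.2 ≤ p.1)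
      (Finset.univ.filter (fun p : Fin k × Fin k => p.2 ≤ p.1))
      (fun x => by simp) F).symm
  have h3 : ∏ x ∈ Finset.univ.filter (fun p : Fin k × Fin k => p.2 ≤ p.1), F x
      = ∏ x : Fin k × Fin k, F x := by
    apply Finset.prod_subset (Finset.filter_subset _ _)
    intro x _ hx
    simp only [Finset.mem_filter, Finset.mem_univ, true_and] at hx
    simp [hF, hx]
  rw [h1, h2, h3, Fintype.prod_prod_type]

/-- the Jacobian `∂u/∂w` is lower triangular in the lexicographic order, with
diagonal entries `(1 + δ_{i,j}) w_{j,j}`, and determinant `2^k √(det G_1 ⋯ det G_k)`. -/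
theorem jacobian_lower_triangular_det (k : ℕ) (w : LTIdx k → ℝ)
    (hpos : ∀ i : Fin k, 0 < w ⟨(i, i), le_refl i⟩) :
    (∀ p q : LTIdx k,
      (p.1.1 < q.1.1 ∨ (p.1.1 = q.1.1 ∧ p.1.2 < q.1.2)) → jacMat k w p q = 0) ∧
    (∀ p : LTIdx k,
      jacMat k w p p
        = (1 + if p.1.1 = p.1.2 then (1 : ℝ) else 0) * w ⟨(p.1.2, p.1.2), le_refl _⟩) ∧
    (jacMat k w).det = 2 ^ k * Real.sqrt (∏ i : Fin k, gramDet k (toMat k w) (i.1 + 1)) := by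
  have part1 : ∀ p q : LTIdx k,
      (p.1.1 < q.1.1 ∨ (p.1.1 = q.1.1 ∧ p.1.2 < q.1.2)) → jacMat k w p q = 0 := by
    rintro ⟨⟨i, j⟩, hij⟩ ⟨⟨a, b⟩, hab⟩ h
    rw [jac_apply]
    simp only at h ⊢
    rcases h with h | ⟨h1, h2⟩
    · have ha1 : ¬ a = i := fun he => by subst he; exact absurd h (lt_irrefl _)
      have ha2 : ¬ a = j := fun he => by
        subst he; exact absurd (lt_of_lt_of_le h hij) (lt_irrefl _)
      rw [if_neg ha1, if_neg ha2, add_zero]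
    · subst h1
      rw [if_pos rfl, toMat_zero k w (by exact fun hle => absurd (lt_of_lt_of_le h2 hle) (lt_irrefl _)), zero_add]
      split
      · next he =>
        subst he
        exact toMat_zero k w (fun hle => absurd (lt_of_lt_of_le h2 (le_trans hle hij)) (lt_irrefl _))
      · rfl
  have part2 : ∀ p : LTIdx k,
      jacMat k w p p
        = (1 + if p.1.1 = p.1.2 then (1 : ℝ) else 0) * w ⟨(p.1.2, p.1.2), le_refl _⟩ := by
    rintro ⟨⟨i, j⟩, hij⟩
    rw [jac_apply]
    simp only
    by_cases h : i = j
    · subst h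
      simp [toMat]
      ring
    · simp [toMat, h]
  refine ⟨part1, part2, ?_⟩
  -- the linear (lexicographic) order on LTIdx k
  letI : LinearOrder (LTIdx k) :=
    LinearOrder.lift' (fun p : LTIdx k => toLex p.1)
      (fun p q h => Subtype.ext (toLex.injective h))
  have hdet : (jacMat k w).det = ∏ p : LTIdx k, jacMat k w p p := by
    apply Matrix.det_of_lowerTriangular
    intro p q h
    apply part1
    have hlt : toLex p.1 < toLex q.1 := OrderDual.toDual_lt_toDual.1 h
    rw [Prod.Lex.lt_iff] at hlt
    exact hlt
  rw [hdet]
  have hdiag : ∏ p : LTIdx k, jacMat k w p p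
      = (∏ p : LTIdx k, (if p.1.1 = p.1.2 then (2:ℝ) else 1))
        * ∏ p : LTIdx k, w ⟨(p.1.2, p.1.2), le_refl _⟩ := by
    rw [← Finset.prod_mul_distrib]
    apply Finset.prod_congr rfl
    intro p _
    rw [part2]
    split <;> ring
  rw [hdiag]
  -- the 2^k factor
  have h2k : (∏ p : LTIdx k, (if p.1.1 = p.1.2 then (2:ℝ) else 1)) = 2 ^ k := by
    rw [prod_LTIdx]
    have : ∀ i : Fin k, (∏ j : Fin k,
        (if h : j ≤ i then (if i = j then (2:ℝ) else 1) else 1)) = 2 := by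
      intro i
      rw [Finset.prod_eq_single i]
      · simp
      · intro j _ hj
        split
        · rw [if_neg (Ne.symm hj)]
        · rfl
      · simp
    calc (∏ i : Fin k, ∏ j : Fin k, (if h : j ≤ i then (if i = j then (2:ℝ) else 1) else 1))
        = ∏ i : Fin k, (2:ℝ) := Finset.prod_congr rfl (fun i _ => this i)
      _ = 2 ^ k := by simp
  rw [h2k]
  congr 1
  -- the sqrt part
  set Q : Fin k → ℝ := fun i => ∏ j : Fin (min (i.1 + 1) k),
    w ⟨(Fin.castLE (min_le_right (i.1+1) k) j, Fin.castLE (min_le_right (i.1+1) k) j),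
        le_refl _⟩ with hQ
  have hQpos : ∀ i, 0 < Q i := by
    intro i
    apply Finset.prod_pos
    intro j _
    exact hpos _
  have hgram : ∀ i : Fin k, gramDet k (toMat k w) (i.1 + 1) = (Q i) ^ 2 := by
    intro i
    rw [gramDet_eq]
  have hsqrt : Real.sqrt (∏ i : Fin k, gramDet k (toMat k w) (i.1 + 1))
      = ∏ i : Fin k, Q i := by
    have : (∏ i : Fin k, gramDet k (toMat k w) (i.1 + 1)) = (∏ i : Fin k, Q i) ^ 2 := by
      rw [← Finset.prod_pow]
      exact Finset.prod_congr rfl (fun i _ => hgram i)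
    rw [this, Real.sqrt_sq (le_of_lt (Finset.prod_pos (fun i _ => hQpos i)))]
  rw [hsqrt]
  -- finally: ∏ over LTIdx of w_{j,j} equals ∏ Q
  rw [prod_LTIdx]
  apply Finset.prod_congr rfl
  intro i _
  have hm : min (i.1 + 1) k ≤ k := min_le_right _ _
  have key : (∏ j : Fin k, (if h : j ≤ i then w ⟨(j, j), le_refl _⟩ else 1))
      = ∏ j : Fin (min (i.1+1) k), (if h : Fin.castLE hm j ≤ i
          then w ⟨(Fin.castLE hm j, Fin.castLE hm j), le_refl _⟩ else 1) := by
    apply prod_fin_trunc hm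
    intro l hl
    rw [dif_neg]
    intro hle
    have h1 : (l : ℕ) ≤ i.1 := hle
    have h2 : min (i.1 + 1) k = i.1 + 1 := min_eq_left (Nat.succ_le_of_lt i.2)
    omega
  rw [key, hQ]
  apply Finset.prod_congr rfl
  intro j _
  have h2 : min (i.1 + 1) k = i.1 + 1 := min_eq_left (Nat.succ_le_of_lt i.2)
  have hj2 := j.2
  have hji : Fin.castLE hm j ≤ i := by
    rw [Fin.le_def]
    simp only [Fin.coe_castLE]
    omega
  rw [dif_pos hji]
end

section
/- The partial derivative of u_{i,j} = Σ_{ℓ=1}^{min(i,j)} w_{i,ℓ} w_{j,ℓ} (with j ≤ i) with respect to w_{r,s} vanishes unless (r,s) ≤ (i,j) in lexicographic order on pairs with s ≤ r; hence the Jacobian matrix of the map (w_{i,j})_{j≤i} ↦ (u_{i,j})_{j≤i} is lower triangular in lexicographic ordering. -/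
open Finset

/-- Derivative of a single matrix entry, as a continuous linear map. -/
noncomputable def entryDeriv (k : ℕ) (i l : Fin k) : (LTIdx k → ℝ) →L[ℝ] ℝ :=
  if h : l ≤ i then ContinuousLinearMap.proj (R := ℝ) (φ := fun _ : LTIdx k => ℝ) ⟨(i, l), h⟩
  else 0

lemma hasFDerivAt_entry (k : ℕ) (w : LTIdx k → ℝ) (i l : Fin k) :
    HasFDerivAt (fun x => toMat k x i l) (entryDeriv k i l) w := by
  unfold toMat entryDeriv
  by_cases h : l ≤ i
  · simp only [Matrix.of_apply, dif_pos h]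
    exact (ContinuousLinearMap.proj (R := ℝ) (φ := fun _ : LTIdx k => ℝ)
      (⟨(i, l), h⟩ : LTIdx k)).hasFDerivAt
  · simp only [Matrix.of_apply, dif_neg h]
    exact hasFDerivAt_const 0 w

/-- the partial derivative `∂u_{i,j}/∂w_{r,s}` vanishes unless
`(r,s) ≤ (i,j)` in the lexicographic order; i.e. the Jacobian of `w ↦ u` is lower
triangular with respect to the lexicographic ordering. -/
theorem jacobian_is_lower_triangular (k : ℕ) (w : LTIdx k → ℝ) :
    ∀ p q : LTIdx k,
      (p.1.1 < q.1.1 ∨ (p.1.1 = q.1.1 ∧ p.1.2 < q.1.2)) →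
      fderiv ℝ (fun x => uMap k x p) w (Pi.single q 1) = 0 := by
  intro p q hlt
  obtain ⟨⟨i, j⟩, hji⟩ := p
  obtain ⟨⟨r, s⟩, hsr⟩ := q
  simp only at hlt hji hsr
  have hD : HasFDerivAt (fun x => uMap k x ⟨(i, j), hji⟩)
      (∑ l : Fin k, (toMat k w i l • entryDeriv k j l + toMat k w j l • entryDeriv k i l)) w := by
    unfold uMap
    simp only
    exact HasFDerivAt.fun_sum fun l _ =>
      (hasFDerivAt_entry k w i l).mul (hasFDerivAt_entry k w j l)
  rw [hD.fderiv]
  rw [ContinuousLinearMap.sum_apply]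
  apply Finset.sum_eq_zero
  intro l _
  simp only [ContinuousLinearMap.add_apply, ContinuousLinearMap.smul_apply]
  have key : ∀ a b : Fin k, entryDeriv k a l (Pi.single ⟨(r, s), hsr⟩ 1)
      = if h : l ≤ a ∧ r = a ∧ s = l then 1 else 0 := by
    intro a b
    unfold entryDeriv
    by_cases h : l ≤ a
    · simp only [dif_pos h, ContinuousLinearMap.proj_apply]
      rw [Pi.single_apply]
      by_cases heq : (⟨(a, l), h⟩ : LTIdx k) = ⟨(r, s), hsr⟩
      · have h1 : r = a ∧ s = l := by
          have := congrArg Subtype.val heq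
          simp only [Prod.mk.injEq] at this
          exact ⟨this.1.symm, this.2.symm⟩
        rw [if_pos heq, dif_pos ⟨h, h1⟩]
      · rw [if_neg heq, dif_neg]
        rintro ⟨h1, h2, h3⟩
        exact heq (by subst h2 h3; rfl)
    · simp only [dif_neg h, ContinuousLinearMap.zero_apply]
      rw [dif_neg (fun hc => h hc.1)]
  rw [key j i, key i j]
  -- first summand: toMat k w i l * [q = (j,l)]
  have t1 : toMat k w i l * (if h : l ≤ j ∧ r = j ∧ s = l then 1 else 0) = 0 := by
    by_cases h : l ≤ j ∧ r = j ∧ s = l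
    · exfalso
      obtain ⟨h1, h2, h3⟩ := h
      rcases hlt with h4 | ⟨h4, h5⟩
      · exact absurd hji (not_le.mpr (h2 ▸ h4))
      · exact absurd (h3 ▸ h1) (not_le.mpr h5)
    · rw [dif_neg h, mul_zero]
  have t2 : toMat k w j l * (if h : l ≤ i ∧ r = i ∧ s = l then 1 else 0) = 0 := by
    by_cases h : l ≤ i ∧ r = i ∧ s = l
    · obtain ⟨h1, h2, h3⟩ := h
      rcases hlt with h4 | ⟨h4, h5⟩
      · exact absurd (h2 ▸ h4) (lt_irrefl _)
      · have : ¬ l ≤ j := by rw [← h3]; exact not_le.mpr h5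
        simp [toMat, this]
    · rw [dif_neg h, mul_zero]
  rw [smul_eq_mul, smul_eq_mul, t1, t2, add_zero]
end
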